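/- Let T : ℝ^d → ℝ^d be a linear map and let U be a nonempty open subset of the unit sphere S^{d−1} (in the subspace topology) such that ‖T v‖ = 1 for every v ∈ U. Then ‖T x‖ = ‖x‖ for all x ∈ ℝ^d; that is, T is an orthogonal transformation of ℝ^d. -/

import Mathlib

/-- a linear map `T : ℝ^d → ℝ^d` sending every direction in some nonempty
open subset `U` of the unit sphere to a unit vector preserves the norm of every vector,
i.e. `T` is an orthogonal transformation. -/
theorem stmt7 {d : ℕ}
    (T : EuclideanSpace ℝ (Fin d) →ₗ[ℝ] EuclideanSpace ℝ (Fin d))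
    (U : Set (Metric.sphere (0 : EuclideanSpace ℝ (Fin d)) 1))
    (hUopen : IsOpen U) (hUne : U.Nonempty)
    (hT : ∀ v ∈ U, ‖T (v : EuclideanSpace ℝ (Fin d))‖ = 1) :
    ∀ x : EuclideanSpace ℝ (Fin d), ‖T x‖ = ‖x‖ := by
  classical
  set E := EuclideanSpace ℝ (Fin d)
  obtain ⟨v, hvU⟩ := hUne
  have hv1 : ‖(v : E)‖ = 1 := mem_sphere_zero_iff_norm.mp v.2
  have hTv : ‖T (v : E)‖ = 1 := hT v hvU
  intro u
  -- obtain an ambient open set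
  obtain ⟨V, hVopen, hVU⟩ := isOpen_induced_iff.mp hUopen
  have hvV : (v : E) ∈ V := by
    have : v ∈ Subtype.val ⁻¹' V := hVU ▸ hvU
    exact this
  -- the normalized perturbation
  set ψ : ℝ → E := fun t => ‖(v : E) + t • u‖⁻¹ • ((v : E) + t • u) with hψ
  have hcont : ContinuousAt ψ 0 := by
    have h1 : Continuous fun t : ℝ => (v : E) + t • u := by continuity
    have h2 : Continuous fun t : ℝ => ‖(v : E) + t • u‖ := h1.norm
    have h3 : ContinuousAt (fun t : ℝ => ‖(v : E) + t • u‖⁻¹) 0 := by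
      apply ContinuousAt.inv₀ h2.continuousAt
      simp [hv1]
    exact h3.smul h1.continuousAt
  have hψ0 : ψ 0 = (v : E) := by simp [hψ, hv1]
  have hV_ev : ∀ᶠ t in nhds (0 : ℝ), ψ t ∈ V := by
    have := hcont.preimage_mem_nhds (hVopen.mem_nhds (by rw [hψ0]; exact hvV))
    exact this
  have hnorm_cont : ContinuousAt (fun t : ℝ => ‖(v : E) + t • u‖) 0 := by
    have h1 : Continuous fun t : ℝ => (v : E) + t • u := by continuity
    exact h1.norm.continuousAt
  have hne_ev : ∀ᶠ t in nhds (0 : ℝ), ‖(v : E) + t • u‖ ≠ 0 := by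
    apply hnorm_cont.eventually_ne
    simp [hv1]
  have key : ∀ᶠ t in nhds (0 : ℝ), ‖T ((v : E) + t • u)‖ = ‖(v : E) + t • u‖ := by
    filter_upwards [hV_ev, hne_ev] with t htV htne
    have hψnorm : ‖ψ t‖ = 1 := by
      rw [hψ]
      simp only [norm_smul, norm_inv, norm_norm]
      field_simp
    have hψsphere : ψ t ∈ Metric.sphere (0 : E) 1 := mem_sphere_zero_iff_norm.mpr hψnorm
    have hmem : (⟨ψ t, hψsphere⟩ : Metric.sphere (0 : E) 1) ∈ U := by
      rw [← hVU]; exact htV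
    have := hT _ hmem
    simp only at this
    rw [hψ] at this
    simp only [map_smul, norm_smul, norm_inv, norm_norm] at this
    field_simp at this
    simp only [map_add, map_smul]
    simpa only [map_add, map_smul] using this
  obtain ⟨ε, hε, hball⟩ := Metric.eventually_nhds_iff.mp key
  set t := ε / 2 with ht
  have htpos : 0 < t := by positivity
  have h1 : ‖T ((v : E) + t • u)‖ = ‖(v : E) + t • u‖ := by
    apply hball; rw [Real.dist_eq, sub_zero, abs_of_pos htpos]; linarith
  have h2 : ‖T ((v : E) + (-t) • u)‖ = ‖(v : E) + (-t) • u‖ := by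
    apply hball; rw [Real.dist_eq, sub_zero, abs_neg, abs_of_pos htpos]; linarith
  -- expand squared norms
  have expand : ∀ (x y : E) (s : ℝ), ‖x + s • y‖ ^ 2
      = ‖x‖ ^ 2 + 2 * s * inner ℝ x y + s ^ 2 * ‖y‖ ^ 2 := by
    intro x y s
    rw [norm_add_sq_real, real_inner_smul_right, norm_smul, Real.norm_eq_abs,
      mul_pow, sq_abs]
    ring
  have e1 : ‖T (v : E)‖ ^ 2 + 2 * t * inner ℝ (T (v : E)) (T u) + t ^ 2 * ‖T u‖ ^ 2
      = ‖(v : E)‖ ^ 2 + 2 * t * inner ℝ (v : E) u + t ^ 2 * ‖u‖ ^ 2 := by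
    have := congrArg (fun r => r ^ 2) h1
    simp only [map_add, map_smul] at this
    rw [expand (T (v : E)) (T u) t, expand (v : E) u t] at this
    exact this
  have e2 : ‖T (v : E)‖ ^ 2 + 2 * (-t) * inner ℝ (T (v : E)) (T u) + (-t) ^ 2 * ‖T u‖ ^ 2
      = ‖(v : E)‖ ^ 2 + 2 * (-t) * inner ℝ (v : E) u + (-t) ^ 2 * ‖u‖ ^ 2 := by
    have := congrArg (fun r => r ^ 2) h2
    simp only [map_add, map_smul] at this
    rw [expand (T (v : E)) (T u) (-t), expand (v : E) u (-t)] at this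
    exact this
  have hTv2 : ‖T (v : E)‖ ^ 2 = 1 := by rw [hTv]; ring
  have hv2 : ‖(v : E)‖ ^ 2 = 1 := by rw [hv1]; ring
  have hmul : t ^ 2 * ‖T u‖ ^ 2 = t ^ 2 * ‖u‖ ^ 2 := by
    linear_combination (e1 + e2) / 2 + hv2 - hTv2
  have ht2 : (t : ℝ) ^ 2 ≠ 0 := by positivity
  have hsq : ‖T u‖ ^ 2 = ‖u‖ ^ 2 := mul_left_cancel₀ ht2 hmul
  calc ‖T u‖ = Real.sqrt (‖T u‖ ^ 2) := by rw [Real.sqrt_sq (norm_nonneg _)]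
    _ = Real.sqrt (‖u‖ ^ 2) := by rw [hsq]
    _ = ‖u‖ := Real.sqrt_sq (norm_nonneg _)
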